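/- arXiv:2110.01858 — 3 statements merged into one kernel-verified Lean document; each statement's English description precedes it below -/
import Mathlib

section
/- Let E be a real inner product space, and let f : E → ℝ be convex and differentiable with gradient ∇f that is L-Lipschitz for some L > 0. Then for all x, y ∈ E the gradient is co-coercive: ⟨∇f(y) − ∇f(x), y − x⟩ ≥ (1/L)‖∇f(y) − ∇f(x)‖². -/
open RealInnerProductSpace Set intervalIntegral

section Aux

variable {E : Type*} [NormedAddCommGroup E] [InnerProductSpace ℝ E] [CompleteSpace E]

/-- derivative of `f` along a line. -/
lemma line_hasDerivAt (f : E → ℝ) (g : E → E) (x v : E) (t : ℝ)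
    (hd : HasGradientAt f (g (x + t • v)) (x + t • v)) :
    HasDerivAt (fun s : ℝ => f (x + s • v)) ⟪g (x + t • v), v⟫ t := by
  have hc : HasDerivAt (fun s : ℝ => x + s • v) v t := by
    simpa using ((hasDerivAt_id t).smul_const v).const_add x
  have := (hasGradientAt_iff_hasFDerivAt.mp hd).comp_hasDerivAt t hc
  simp only [InnerProductSpace.toDual_apply_apply] at this
  exact this

/-- first-order condition for convexity. -/
lemma first_order (f : E → ℝ) (gx : E) (x y : E)
    (hconv : ConvexOn ℝ Set.univ f) (hd : HasGradientAt f gx x) :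
    f x + ⟪gx, y - x⟫ ≤ f y := by
  set v := y - x with hv
  have hφ : HasDerivAt (fun s : ℝ => f (x + s • v)) ⟪gx, v⟫ 0 := by
    have := line_hasDerivAt f (fun _ => gx) x v 0 (by simpa using hd)
    simpa using this
  have hφc : ConvexOn ℝ Set.univ (fun s : ℝ => f (x + s • v)) := by
    have : ConvexOn ℝ (AffineMap.lineMap (k := ℝ) x y ⁻¹' Set.univ) (f ∘ AffineMap.lineMap (k := ℝ) x y) := hconv.comp_affineMap (AffineMap.lineMap x y)
    simp only [Set.preimage_univ] at this
    convert this using 2 with s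
    simp only [Function.comp_apply, AffineMap.lineMap_apply_module]
    congr 1
    module
  have := hφc.le_slope_of_hasDerivAt (Set.mem_univ 0) (Set.mem_univ 1) one_pos hφ
  rw [slope_def_field] at this
  simp only [zero_smul, add_zero, one_smul] at this
  have h1 : x + v = y := by rw [hv]; abel
  rw [h1] at this
  nlinarith [this]

/-- descent lemma. -/
lemma descent (f : E → ℝ) (g : E → E) (L : ℝ) (hL : 0 < L) (x y : E)
    (hdiff : ∀ x, HasGradientAt f (g x) x)
    (hlip : ∀ x y, ‖g x - g y‖ ≤ L * ‖x - y‖) :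
    f y ≤ f x + ⟪g x, y - x⟫ + L / 2 * ‖y - x‖ ^ 2 := by
  set v := y - x with hv
  set φ' : ℝ → ℝ := fun t => ⟪g (x + t • v), v⟫ with hφ'
  have hgcont : Continuous g := by
    apply (LipschitzWith.of_dist_le_mul (K := L.toNNReal) (f := g) ?_).continuous
    intro a b
    rw [dist_eq_norm, dist_eq_norm, Real.coe_toNNReal _ hL.le]
    exact hlip a b
  have hcont : Continuous φ' := by
    apply Continuous.inner
    · exact hgcont.comp (by continuity)
    · exact continuous_const
  have hderiv : ∀ t ∈ Set.uIcc (0:ℝ) 1, HasDerivAt (fun s : ℝ => f (x + s • v)) (φ' t) t :=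
    fun t _ => line_hasDerivAt f g x v t (hdiff _)
  have hint : IntervalIntegrable φ' MeasureTheory.volume 0 1 :=
    hcont.intervalIntegrable 0 1
  have hFTC := intervalIntegral.integral_eq_sub_of_hasDerivAt hderiv hint
  simp only [zero_smul, add_zero, one_smul] at hFTC
  have h1 : x + v = y := by rw [hv]; abel
  rw [h1] at hFTC
  have hbound : ∫ t in (0:ℝ)..1, φ' t ≤ ∫ t in (0:ℝ)..1, (⟪g x, v⟫ + L * t * ‖v‖ ^ 2) := by
    apply intervalIntegral.integral_mono_on zero_le_one hint
    · apply IntervalIntegrable.add intervalIntegrable_const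
      apply Continuous.intervalIntegrable; continuity
    · intro t ht
      have key : φ' t - ⟪g x, v⟫ ≤ L * t * ‖v‖ ^ 2 := by
        have h2 : φ' t - ⟪g x, v⟫ = ⟪g (x + t • v) - g x, v⟫ := by
          rw [hφ']; simp [inner_sub_left]
        rw [h2]
        calc ⟪g (x + t • v) - g x, v⟫ ≤ ‖g (x + t • v) - g x‖ * ‖v‖ :=
              real_inner_le_norm _ _
          _ ≤ (L * ‖(x + t • v) - x‖) * ‖v‖ :=
              mul_le_mul_of_nonneg_right (hlip _ _) (norm_nonneg _)
          _ = L * t * ‖v‖ ^ 2 := by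
              rw [show (x + t • v) - x = t • v by abel, norm_smul,
                Real.norm_eq_abs, abs_of_nonneg ht.1]
              ring
      linarith
  have hrhs : ∫ t in (0:ℝ)..1, (⟪g x, v⟫ + L * t * ‖v‖ ^ 2) =
      ⟪g x, v⟫ + L / 2 * ‖v‖ ^ 2 := by
    rw [intervalIntegral.integral_add intervalIntegrable_const
      (by apply Continuous.intervalIntegrable; continuity)]
    simp only [intervalIntegral.integral_const, smul_eq_mul]
    have h3 : ∫ t in (0:ℝ)..1, L * t * ‖v‖ ^ 2 = L / 2 * ‖v‖ ^ 2 := by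
      have h4 : (fun t : ℝ => L * t * ‖v‖ ^ 2) = fun t : ℝ => (L * ‖v‖ ^ 2) * t := by
        funext t; ring
      rw [h4, intervalIntegral.integral_const_mul, integral_id]
      ring
    rw [h3]; ring
  have := hFTC ▸ hbound
  rw [hrhs] at this
  linarith

omit [CompleteSpace E] in
/-- a linear functional is concave. -/
lemma inner_concaveOn (a : E) : ConcaveOn ℝ Set.univ (fun w : E => ⟪a, w⟫) := by
  refine ⟨convex_univ, fun p _ q _ s t hs ht hst => ?_⟩
  simp only [smul_eq_mul]
  rw [inner_add_right, real_inner_smul_right, real_inner_smul_right]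

/-- one-sided cocoercivity inequality. -/
lemma half_cocoercive (f : E → ℝ) (g : E → E) (L : ℝ) (hL : 0 < L) (x y : E)
    (hconv : ConvexOn ℝ Set.univ f)
    (hdiff : ∀ x, HasGradientAt f (g x) x)
    (hlip : ∀ x y, ‖g x - g y‖ ≤ L * ‖x - y‖) :
    f x + ⟪g x, y - x⟫ + 1 / (2 * L) * ‖g y - g x‖ ^ 2 ≤ f y := by
  set F : E → ℝ := fun z => f z - ⟪g x, z⟫ with hF
  set G : E → E := fun z => g z - g x with hG
  have hFdiff : ∀ z, HasGradientAt F (G z) z := by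
    intro z
    have h1 : HasFDerivAt f (InnerProductSpace.toDual ℝ E (g z)) z := hdiff z
    have h2 : HasFDerivAt (fun w : E => ⟪g x, w⟫) (InnerProductSpace.toDual ℝ E (g x)) z :=
      (InnerProductSpace.toDual ℝ E (g x)).hasFDerivAt
    have h3 : HasFDerivAt F (InnerProductSpace.toDual ℝ E (g z) - InnerProductSpace.toDual ℝ E (g x)) z := h1.sub h2
    rw [hasGradientAt_iff_hasFDerivAt]
    convert h3 using 1
    ext w
    simp [InnerProductSpace.toDual_apply_apply, inner_sub_left, hG]
    simp [hG]
  have hFconv : ConvexOn ℝ Set.univ F := hconv.sub (inner_concaveOn (g x))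
  have hGlip : ∀ a b, ‖G a - G b‖ ≤ L * ‖a - b‖ := by
    intro a b
    have : G a - G b = g a - g b := by rw [hG]; beta_reduce; abel
    rw [this]; exact hlip a b
  have hGx : G x = 0 := by rw [hG]; simp
  set z₀ : E := y - (1 / L) • G y with hz₀
  have hmin : F x ≤ F z₀ := by
    have := first_order F (G x) x z₀ hFconv (hFdiff x)
    rw [hGx] at this
    simpa using this
  have hdes := descent F G L hL y z₀ hFdiff hGlip
  have hzy : z₀ - y = -((1 / L) • G y) := by rw [hz₀]; abel
  have hip : ⟪G y, z₀ - y⟫ = -(1 / L) * ‖G y‖ ^ 2 := by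
    rw [hzy, inner_neg_right, real_inner_smul_right, real_inner_self_eq_norm_sq]
    ring
  have hnrm : ‖z₀ - y‖ ^ 2 = (1 / L) ^ 2 * ‖G y‖ ^ 2 := by
    rw [hzy, norm_neg, norm_smul, mul_pow, Real.norm_eq_abs, sq_abs]
  rw [hip, hnrm] at hdes
  have hL2 : L / 2 * ((1 / L) ^ 2 * ‖G y‖ ^ 2) = 1 / (2 * L) * ‖G y‖ ^ 2 := by
    field_simp
  have hchain : F x ≤ F y - 1 / (2 * L) * ‖G y‖ ^ 2 := by
    calc F x ≤ F z₀ := hmin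
      _ ≤ F y + -(1 / L) * ‖G y‖ ^ 2 + L / 2 * ((1 / L) ^ 2 * ‖G y‖ ^ 2) := hdes
      _ = F y - 1 / (2 * L) * ‖G y‖ ^ 2 := by rw [hL2]; field_simp; ring
  have hFx : F x = f x - ⟪g x, x⟫ := rfl
  have hFy : F y = f y - ⟪g x, y⟫ := rfl
  have hGy : G y = g y - g x := rfl
  rw [hFx, hFy, hGy] at hchain
  have hsub : ⟪g x, y - x⟫ = ⟪g x, y⟫ - ⟪g x, x⟫ := inner_sub_right _ _ _
  rw [hsub]
  linarith

end Aux

/-- Co-coercivity of the gradient of a convex function with `L`-Lipschitz gradient: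
`⟪∇f y - ∇f x, y - x⟫ ≥ (1/L) ‖∇f y - ∇f x‖²`. -/
theorem gradient_cocoercive {E : Type*} [NormedAddCommGroup E] [InnerProductSpace ℝ E]
    [CompleteSpace E] (f : E → ℝ) (g : E → E) (L : ℝ) (hL : 0 < L)
    (hconv : ConvexOn ℝ Set.univ f)
    (hdiff : ∀ x, HasGradientAt f (g x) x)
    (hlip : ∀ x y, ‖g x - g y‖ ≤ L * ‖x - y‖) :
    ∀ x y, (1 / L) * ‖g y - g x‖ ^ 2 ≤ ⟪g y - g x, y - x⟫ := by
  intro x y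
  have h1 := half_cocoercive f g L hL x y hconv hdiff hlip
  have h2 := half_cocoercive f g L hL y x hconv hdiff hlip
  have hn : ‖g x - g y‖ = ‖g y - g x‖ := norm_sub_rev _ _
  rw [hn] at h2
  have e1 : ⟪g y - g x, y - x⟫ = ⟪g y, y - x⟫ - ⟪g x, y - x⟫ := inner_sub_left _ _ _
  have e2 : ⟪g y, x - y⟫ = -⟪g y, y - x⟫ := by
    rw [show x - y = -(y - x) by abel, inner_neg_right]
  rw [e2] at h2
  have hc : 1 / (2 * L) * ‖g y - g x‖ ^ 2 + 1 / (2 * L) * ‖g y - g x‖ ^ 2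
      = (1 / L) * ‖g y - g x‖ ^ 2 := by field_simp; ring
  linarith [e1]
end

section
/- Let E be a real inner product space, and let f : E → ℝ be differentiable with gradient ∇f that is L-Lipschitz for some L > 0, and suppose f is bounded below by f*, i.e., f* ≤ f(x) for all x. Let the gradient descent iterates be defined by x⁽ᵏ⁺¹⁾ = x⁽ᵏ⁾ − (1/L)·∇f(x⁽ᵏ⁾) starting from an arbitrary x⁽⁰⁾. Then for every t ∈ ℕ: min_{0 ≤ k ≤ t} ‖∇f(x⁽ᵏ⁾)‖² ≤ 2L·(f(x⁽⁰⁾) − f*)/(t+1). -/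
open RealInnerProductSpace

lemma descent_lemma {E : Type*} [NormedAddCommGroup E]
    [InnerProductSpace ℝ E] [CompleteSpace E] (f : E → ℝ) (g : E → E)
    (L : ℝ) (hL : 0 < L)
    (hdiff : ∀ z, HasGradientAt f (g z) z)
    (hlip : ∀ z w, ‖g z - g w‖ ≤ L * ‖z - w‖)
    (x v : E) : f (x + v) ≤ f x + ⟪g x, v⟫ + L / 2 * ‖v‖ ^ 2 := by
  set ψ : ℝ → ℝ := fun t => L * t ^ 2 / 2 * ‖v‖ ^ 2 + t * ⟪g x, v⟫ + f x - f (x + t • v) with hψ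
  have hd : ∀ t : ℝ, HasDerivAt ψ (L * t * ‖v‖ ^ 2 + ⟪g x, v⟫ - ⟪g (x + t • v), v⟫) t := by
    intro t
    have hc : HasDerivAt (fun t : ℝ => x + t • v) v t := by
      simpa using ((hasDerivAt_id t).smul_const v).const_add x
    have hf : HasDerivAt (fun t : ℝ => f (x + t • v)) ⟪g (x + t • v), v⟫ t := by
      have := ((hdiff (x + t • v)).hasFDerivAt).comp_hasDerivAt t hc
      exact this
    have hpoly : HasDerivAt (fun t : ℝ => L * t ^ 2 / 2 * ‖v‖ ^ 2 + t * ⟪g x, v⟫ + f x)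
        (L * t * ‖v‖ ^ 2 + ⟪g x, v⟫) t := by
      have h1 : HasDerivAt (fun t : ℝ => L * t ^ 2 / 2 * ‖v‖ ^ 2) (L * t * ‖v‖ ^ 2) t := by
        have := (hasDerivAt_pow 2 t).const_mul L
        have := (this.div_const 2).mul_const (‖v‖ ^ 2)
        exact this.congr_deriv (by rw [show (2:ℕ) - 1 = 1 from rfl]; push_cast; ring)
      have h2 : HasDerivAt (fun t : ℝ => t * ⟪g x, v⟫) ⟪g x, v⟫ t := by
        simpa using (hasDerivAt_id t).mul_const ⟪g x, v⟫
      simpa using (h1.add h2).add_const (f x)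
    exact hpoly.sub hf
  have hmono : MonotoneOn ψ (Set.Icc 0 1) := by
    apply monotoneOn_of_deriv_nonneg (convex_Icc 0 1)
    · exact fun t _ => ((hd t).differentiableAt).continuousAt.continuousWithinAt
    · intro t ht
      exact ((hd t).differentiableAt).differentiableWithinAt
    · intro t ht
      rw [interior_Icc] at ht
      rw [(hd t).deriv]
      have h1 : ⟪g (x + t • v) - g x, v⟫ ≤ ‖g (x + t • v) - g x‖ * ‖v‖ :=
        real_inner_le_norm _ _
      have h2 : ‖g (x + t • v) - g x‖ ≤ L * (t * ‖v‖) := by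
        have := hlip (x + t • v) x
        simpa [norm_smul, abs_of_pos ht.1] using this
      have h3 : ‖g (x + t • v) - g x‖ * ‖v‖ ≤ L * (t * ‖v‖) * ‖v‖ :=
        mul_le_mul_of_nonneg_right h2 (norm_nonneg v)
      have h4 := h1.trans h3
      rw [inner_sub_left] at h4
      have h5 : L * (t * ‖v‖) * ‖v‖ = L * t * ‖v‖ ^ 2 := by ring
      rw [h5] at h4
      linarith
  have h01 : ψ 0 ≤ ψ 1 := hmono (by norm_num) (by norm_num) (by norm_num)
  simp only [hψ] at h01
  norm_num at h01
  linarith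

/-- Convergence rate of gradient descent for a (possibly nonconvex) function bounded
below: after `t` iterations, the smallest squared gradient norm among the iterates is
at most `2L (f x₀ - f*) / (t+1)`. -/
theorem gradient_descent_min_grad_norm_bound {E : Type*} [NormedAddCommGroup E]
    [InnerProductSpace ℝ E] [CompleteSpace E] (f : E → ℝ) (g : E → E)
    (L : ℝ) (hL : 0 < L)
    (hdiff : ∀ z, HasGradientAt f (g z) z)
    (hlip : ∀ z w, ‖g z - g w‖ ≤ L * ‖z - w‖)
    (fstar : ℝ) (hbound : ∀ z, fstar ≤ f z)
    (x : ℕ → E) (hiter : ∀ k, x (k + 1) = x k - (1 / L) • g (x k)) :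
    ∀ t : ℕ, ∃ k ≤ t, ‖g (x k)‖ ^ 2 ≤ 2 * L * (f (x 0) - fstar) / ((t : ℝ) + 1) := by
  have hstep : ∀ k, f (x (k + 1)) ≤ f (x k) - ‖g (x k)‖ ^ 2 / (2 * L) := by
    intro k
    have h := descent_lemma f g L hL hdiff hlip (x k) (-((1 / L) • g (x k)))
    have hx : x (k + 1) = x k + -((1 / L) • g (x k)) := by rw [hiter k]; abel
    rw [← hx] at h
    have hi : ⟪g (x k), -((1 / L) • g (x k))⟫ = -(1 / L) * ‖g (x k)‖ ^ 2 := by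
      rw [inner_neg_right, real_inner_smul_right, real_inner_self_eq_norm_sq]; ring
    have hn : ‖-((1 / L) • g (x k))‖ ^ 2 = (1 / L) ^ 2 * ‖g (x k)‖ ^ 2 := by
      rw [norm_neg, norm_smul, Real.norm_eq_abs,
        abs_of_pos (by positivity : (0:ℝ) < 1 / L), mul_pow]
    rw [hi, hn] at h
    have e : -(1 / L) * ‖g (x k)‖ ^ 2 + L / 2 * ((1 / L) ^ 2 * ‖g (x k)‖ ^ 2)
        = -(‖g (x k)‖ ^ 2 / (2 * L)) := by
      field_simp; ring
    linarith
  intro t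
  -- choose k minimizing ‖g (x k)‖ over 0..t
  obtain ⟨k, hk, hkmin⟩ := Finset.exists_min_image (Finset.range (t + 1))
    (fun j => ‖g (x j)‖ ^ 2) ⟨0, Finset.mem_range.mpr (Nat.succ_pos t)⟩
  refine ⟨k, Nat.lt_succ_iff.mp (Finset.mem_range.mp hk), ?_⟩
  have hsum : ∀ n : ℕ, (∑ j ∈ Finset.range n, ‖g (x j)‖ ^ 2 / (2 * L)) ≤ f (x 0) - f (x n) := by
    intro n
    induction n with
    | zero => simp
    | succ n ih =>
      rw [Finset.sum_range_succ]
      have := hstep n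
      linarith
  have hsumt := hsum (t + 1)
  have hlow : ((t : ℝ) + 1) * (‖g (x k)‖ ^ 2 / (2 * L)) ≤
      ∑ j ∈ Finset.range (t + 1), ‖g (x j)‖ ^ 2 / (2 * L) := by
    have h := Finset.card_nsmul_le_sum (Finset.range (t + 1))
      (fun j => ‖g (x j)‖ ^ 2 / (2 * L)) (‖g (x k)‖ ^ 2 / (2 * L))
      (fun j hj =>
        (div_le_div_iff_of_pos_right (by positivity : (0:ℝ) < 2 * L)).mpr (hkmin j hj))
    simp only [Finset.card_range, nsmul_eq_mul] at h
    push_cast at h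
    convert h using 2
  have hfb := hbound (x (t + 1))
  have ht1 : (0:ℝ) < (t : ℝ) + 1 := by positivity
  rw [le_div_iff₀ ht1]
  have key : ((t : ℝ) + 1) * (‖g (x k)‖ ^ 2 / (2 * L)) ≤ f (x 0) - fstar := by linarith
  have h2L : ‖g (x k)‖ ^ 2 / (2 * L) * (2 * L) = ‖g (x k)‖ ^ 2 := by field_simp
  nlinarith [key, hL]
end

section
/- Let E be a real inner product space, and let f : E → ℝ be convex and differentiable with gradient ∇f that is L-Lipschitz for some L > 0. Suppose x* is a global minimizer of f (f(x*) ≤ f(y) for all y). Let the gradient descent iterates be x⁽ᵏ⁺¹⁾ = x⁽ᵏ⁾ − (1/L)·∇f(x⁽ᵏ⁾) starting from an arbitrary x⁽⁰⁾. Then for every t ∈ ℕ: f(x⁽ᵗ⁺¹⁾) − f(x*) ≤ 2L·‖x⁽⁰⁾ − x*‖²/(t+1). -/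
open RealInnerProductSpace

/-- Convergence rate of gradient descent for convex functions:
`f x⁽ᵗ⁺¹⁾ - f x* ≤ 2L ‖x⁽⁰⁾ - x*‖² / (t+1)`. -/
theorem gradient_descent_convex_rate {E : Type*} [NormedAddCommGroup E]
    [InnerProductSpace ℝ E] [CompleteSpace E] (f : E → ℝ) (g : E → E)
    (L : ℝ) (hL : 0 < L)
    (hconv : ConvexOn ℝ Set.univ f)
    (hdiff : ∀ z, HasGradientAt f (g z) z)
    (hlip : ∀ z w, ‖g z - g w‖ ≤ L * ‖z - w‖)
    (xstar : E) (hmin : ∀ y, f xstar ≤ f y)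
    (x : ℕ → E) (hiter : ∀ k, x (k + 1) = x k - (1 / L) • g (x k)) :
    ∀ t : ℕ, f (x (t + 1)) - f xstar ≤ 2 * L * ‖x 0 - xstar‖ ^ 2 / ((t : ℝ) + 1) := by
  -- derivative of `s ↦ f (z + s • v)`
  have hderiv : ∀ (z v : E) (s : ℝ),
      HasDerivAt (fun s : ℝ => f (z + s • v)) ⟪g (z + s • v), v⟫ s := by
    intro z v s
    have h1 : HasDerivAt (fun s : ℝ => z + s • v) v s := by
      simpa using ((hasDerivAt_id s).smul_const v).const_add z
    have h2 := (hdiff (z + s • v)).hasFDerivAt.comp_hasDerivAt s h1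
    simp at h2
    exact h2
  -- first-order condition for convexity
  have hfo : ∀ z y : E, f z + ⟪g z, y - z⟫ ≤ f y := by
    intro z y
    set φ : ℝ → ℝ := fun s => f (z + s • (y - z)) with hφdef
    have hφconv : ConvexOn ℝ (Set.univ : Set ℝ) φ := by
      have := hconv.comp_affineMap (AffineMap.lineMap z y)
      have heq : φ = f ∘ (AffineMap.lineMap z y) := by
        funext s
        simp [hφdef, AffineMap.lineMap_apply, add_comm]
      rw [heq]
      simpa using this
    have hslope := hφconv.le_slope_of_hasDerivAt (Set.mem_univ (0 : ℝ))
      (Set.mem_univ (1 : ℝ)) one_pos (hderiv z (y - z) 0)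
    have h0 : φ 0 = f z := by simp [hφdef]
    have h1 : φ 1 = f y := by simp [hφdef]
    rw [slope_def_field, h0, h1] at hslope
    simp only [zero_smul, add_zero, sub_zero, div_one] at hslope
    linarith
  -- descent lemma
  have hdesc : ∀ z v : E, f (z + v) ≤ f z + ⟪g z, v⟫ + L / 2 * ‖v‖ ^ 2 := by
    intro z v
    set A : ℝ := ⟪g z, v⟫ with hA
    set B : ℝ := L / 2 * ‖v‖ ^ 2 with hB
    set ψ : ℝ → ℝ := fun s => f (z + s • v) - s * A - B * s ^ 2 with hψdef
    have hψ' : ∀ s : ℝ, HasDerivAt ψ (⟪g (z + s • v), v⟫ - A - B * (2 * s)) s := by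
      intro s
      have h1 : HasDerivAt (fun s : ℝ => s * A) A s := by
        simpa using (hasDerivAt_id s).mul_const A
      have h2 : HasDerivAt (fun s : ℝ => B * s ^ 2) (B * (2 * s)) s := by
        have := (hasDerivAt_pow 2 s).const_mul B
        simpa [mul_comm] using this
      exact ((hderiv z v s).sub h1).sub h2
    have hcont : ContinuousOn ψ (Set.Icc 0 1) :=
      (Continuous.continuousOn (by
        exact continuous_iff_continuousAt.2 fun s => (hψ' s).continuousAt))
    obtain ⟨c, hc, hceq⟩ := exists_hasDerivAt_eq_slope ψ
      (fun s => ⟪g (z + s • v), v⟫ - A - B * (2 * s)) one_pos hcont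
      (fun s _ => hψ' s)
    have hc0 : 0 < c := hc.1
    have hc1 : c < 1 := hc.2
    -- bound the derivative at c
    have hbound : ⟪g (z + c • v), v⟫ - A ≤ L * c * ‖v‖ ^ 2 := by
      have h1 : ⟪g (z + c • v) - g z, v⟫ ≤ ‖g (z + c • v) - g z‖ * ‖v‖ :=
        real_inner_le_norm _ _
      have h2 : ‖g (z + c • v) - g z‖ ≤ L * ‖c • v‖ := by
        simpa using hlip (z + c • v) z
      have h3 : ‖c • v‖ = c * ‖v‖ := by
        rw [norm_smul, Real.norm_eq_abs, abs_of_pos hc0]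
      have h4 : ⟪g (z + c • v) - g z, v⟫ = ⟪g (z + c • v), v⟫ - A := by
        rw [inner_sub_left]
      rw [h3] at h2
      nlinarith [mul_le_mul_of_nonneg_right h2 (norm_nonneg v), norm_nonneg v, sq_nonneg ‖v‖]
    have hderivle : ⟪g (z + c • v), v⟫ - A - B * (2 * c) ≤ 0 := by
      have : B * (2 * c) = L * c * ‖v‖ ^ 2 := by rw [hB]; ring
      linarith
    have hψ1 : ψ 1 - ψ 0 ≤ 0 := by
      have : (ψ 1 - ψ 0) / (1 - 0) ≤ 0 := hceq ▸ hderivle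
      simpa using this
    have e1 : ψ 1 = f (z + v) - A - B := by simp [hψdef]
    have e0 : ψ 0 = f z := by simp [hψdef]
    rw [e1, e0] at hψ1
    linarith
  -- one-step estimate: sufficient decrease
  have hstep : ∀ k : ℕ, f (x (k + 1)) ≤ f (x k) - 1 / (2 * L) * ‖g (x k)‖ ^ 2 := by
    intro k
    have hx : x (k + 1) = x k + (-(1 / L)) • g (x k) := by
      rw [hiter k]; module
    have := hdesc (x k) ((-(1 / L)) • g (x k))
    rw [← hx] at this
    have hin : ⟪g (x k), (-(1 / L)) • g (x k)⟫ = -(1 / L) * ‖g (x k)‖ ^ 2 := by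
      rw [real_inner_smul_right, real_inner_self_eq_norm_sq]
    have hn : ‖(-(1 / L)) • g (x k)‖ ^ 2 = (1 / L) ^ 2 * ‖g (x k)‖ ^ 2 := by
      rw [norm_smul, Real.norm_eq_abs, mul_pow, abs_neg, abs_of_pos (by positivity)]
    rw [hin, hn] at this
    have hL' : L ≠ 0 := ne_of_gt hL
    have : f (x (k + 1)) ≤ f (x k) - (1 / L) * ‖g (x k)‖ ^ 2
        + L / 2 * ((1 / L) ^ 2 * ‖g (x k)‖ ^ 2) := by linarith
    have heq : f (x k) - (1 / L) * ‖g (x k)‖ ^ 2 + L / 2 * ((1 / L) ^ 2 * ‖g (x k)‖ ^ 2)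
        = f (x k) - 1 / (2 * L) * ‖g (x k)‖ ^ 2 := by
      field_simp
      ring
    linarith [heq ▸ this]
  have hmono : ∀ k : ℕ, f (x (k + 1)) ≤ f (x k) := by
    intro k
    have := hstep k
    have hp : 0 ≤ 1 / (2 * L) * ‖g (x k)‖ ^ 2 := by positivity
    linarith
  -- key per-step bound
  have hkey : ∀ k : ℕ, f (x (k + 1)) - f xstar
      ≤ L / 2 * (‖x k - xstar‖ ^ 2 - ‖x (k + 1) - xstar‖ ^ 2) := by
    intro k
    have h1 := hstep k
    have h2 : f xstar ≥ f (x k) + ⟪g (x k), xstar - x k⟫ := hfo (x k) xstar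
    have h3 : ⟪g (x k), xstar - x k⟫ = -⟪g (x k), x k - xstar⟫ := by
      rw [← inner_neg_right]; congr 1; abel
    -- expand the norm
    have h4 : ‖x (k + 1) - xstar‖ ^ 2
        = ‖x k - xstar‖ ^ 2 - 2 * (1 / L) * ⟪g (x k), x k - xstar⟫
          + (1 / L) ^ 2 * ‖g (x k)‖ ^ 2 := by
      have hx : x (k + 1) - xstar = (x k - xstar) - (1 / L) • g (x k) := by
        rw [hiter k]; abel
      rw [hx, norm_sub_sq_real, real_inner_smul_right, norm_smul, Real.norm_eq_abs,
        abs_of_pos (by positivity : (0:ℝ) < 1 / L), mul_pow,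
        real_inner_comm]
      ring
    have hL' : L ≠ 0 := ne_of_gt hL
    have h5 : L / 2 * (‖x k - xstar‖ ^ 2 - ‖x (k + 1) - xstar‖ ^ 2)
        = ⟪g (x k), x k - xstar⟫ - 1 / (2 * L) * ‖g (x k)‖ ^ 2 := by
      rw [h4]
      field_simp
      ring
    rw [h5]
    rw [h3] at h2
    linarith
  -- summed estimate by induction
  have hsum : ∀ t : ℕ, ((t : ℝ) + 1) * (f (x (t + 1)) - f xstar)
      + L / 2 * ‖x (t + 1) - xstar‖ ^ 2 ≤ L / 2 * ‖x 0 - xstar‖ ^ 2 := by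
    intro t
    induction t with
    | zero =>
      have := hkey 0
      push_cast
      linarith
    | succ n ih =>
      have h1 := hkey (n + 1)
      have h2 : f (x (n + 1 + 1)) ≤ f (x (n + 1)) := hmono (n + 1)
      have h3 : ((n : ℝ) + 1) * (f (x (n + 1 + 1)) - f xstar)
          ≤ ((n : ℝ) + 1) * (f (x (n + 1)) - f xstar) := by
        apply mul_le_mul_of_nonneg_left (by linarith) (by positivity)
      push_cast
      push_cast at ih
      nlinarith
  -- conclude
  intro t
  have h := hsum t
  have ht : (0 : ℝ) < (t : ℝ) + 1 := by positivity
  rw [le_div_iff₀ ht]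
  have hnn : 0 ≤ L / 2 * ‖x (t + 1) - xstar‖ ^ 2 := by positivity
  nlinarith [norm_nonneg (x 0 - xstar), sq_nonneg ‖x 0 - xstar‖]
end
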